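/- Let 0 < δ ≤ γ < √n and e ∈ ℝ^n with ‖e‖ = √n. If s̄ ∈ K_e(γ) with s̄ ≠ 0, and θ denotes the angle between s̄ and e (so cos θ ≥ γ/√n), then the Euclidean distance from s̄ to the boundary of K_e(δ) is at least ‖s̄‖·(√(1 − δ²/n)·cos θ − (δ/√n)·sin θ). -/

import Mathlib

set_option maxHeartbeats 1000000


lemma sq_le_imp {a b : ℝ} (ha : 0 ≤ a) (hb : 0 ≤ b) (h : a ^ 2 ≤ b ^ 2) : a ≤ b :=
  (pow_le_pow_iff_left₀ ha hb two_ne_zero).mp h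

lemma key_real (c sβ a b P Q Ns Nx D : ℝ)
    (hc0 : 0 < c) (hc1 : c < 1) (hsβ0 : 0 ≤ sβ) (hsβ2 : sβ ^ 2 = 1 - c ^ 2)
    (hP0 : 0 ≤ P) (hQ0 : 0 ≤ Q) (hNs : Ns ^ 2 = a ^ 2 + P ^ 2)
    (hNx : Nx ^ 2 = b ^ 2 + Q ^ 2) (hNs0 : 0 ≤ Ns) (hNx0 : 0 ≤ Nx)
    (hsa : c * Ns ≤ a) (hx : b ≤ c * Nx)
    (hD0 : 0 ≤ D) (hD : (a - b) ^ 2 + (P - Q) ^ 2 ≤ D ^ 2) :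
    sβ * a - c * P ≤ D := by
  have ha0 : 0 ≤ a := le_trans (by positivity) hsa
  have hbQ : sβ * b ≤ c * Q := by
    rcases le_or_gt b 0 with hb0 | hb0
    · have : sβ * b ≤ 0 := mul_nonpos_of_nonneg_of_nonpos hsβ0 hb0
      nlinarith
    · apply sq_le_imp (by positivity) (by positivity)
      have hb2 : b ^ 2 ≤ c ^ 2 * (b ^ 2 + Q ^ 2) := by nlinarith
      nlinarith
  have hc0' : 0 ≤ sβ * a - c * P := by
    have ha2 : c ^ 2 * (a ^ 2 + P ^ 2) ≤ a ^ 2 := by nlinarith [mul_self_le_mul_self (by positivity : (0:ℝ) ≤ c * Ns) hsa]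
    have : c * P ≤ sβ * a := by
      apply sq_le_imp (by positivity) (by positivity)
      nlinarith
    linarith
  have hCS : (sβ * (a - b) - c * (P - Q)) ^ 2 ≤ (a - b) ^ 2 + (P - Q) ^ 2 := by
    nlinarith [sq_nonneg (c * (a - b) + sβ * (P - Q))]
  have h1 : sβ * a - c * P ≤ sβ * (a - b) - c * (P - Q) := by linarith [hbQ]; 
  apply sq_le_imp hc0' hD0
  calc (sβ * a - c * P) ^ 2 ≤ (sβ * (a - b) - c * (P - Q)) ^ 2 := by
        apply pow_le_pow_left₀ hc0' h1
    _ ≤ (a - b) ^ 2 + (P - Q) ^ 2 := hCS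
    _ ≤ D ^ 2 := hD

lemma key_dist {V : Type*} [NormedAddCommGroup V] [InnerProductSpace ℝ V]
    (u : V) (hu : ‖u‖ = 1) (c sβ : ℝ) (hc0 : 0 < c) (hc1 : c < 1)
    (hsβ : sβ = Real.sqrt (1 - c ^ 2))
    (s x : V) (hsa : (inner ℝ u s : ℝ) ≥ c * ‖s‖)
    (hx : (inner ℝ u x : ℝ) ≤ c * ‖x‖) :
    sβ * (inner ℝ u s : ℝ) - c * ‖s - (inner ℝ u s : ℝ) • u‖ ≤ ‖s - x‖ := by
  set a : ℝ := inner ℝ u s with ha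
  set b : ℝ := inner ℝ u x with hb
  set p : V := s - a • u with hp
  set q : V := x - b • u with hq
  have huu : (inner ℝ u u : ℝ) = 1 := by
    rw [real_inner_self_eq_norm_sq, hu]; norm_num
  have hup : (inner ℝ u p : ℝ) = 0 := by
    simp [hp, inner_sub_right, real_inner_smul_right, huu, hu, ha]
  have huq : (inner ℝ u q : ℝ) = 0 := by
    simp [hq, inner_sub_right, real_inner_smul_right, huu, hu, hb]
  have hpu : (inner ℝ p u : ℝ) = 0 := by rw [real_inner_comm]; exact hup
  have hqu : (inner ℝ q u : ℝ) = 0 := by rw [real_inner_comm]; exact huq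
  have hsP : ‖s‖ ^ 2 = a ^ 2 + ‖p‖ ^ 2 := by
    have hse : s = a • u + p := by rw [hp]; abel
    calc ‖s‖ ^ 2 = ‖a • u + p‖ ^ 2 := by rw [← hse]
    _ = a ^ 2 + ‖p‖ ^ 2 := by
        rw [norm_add_sq_real, real_inner_smul_left, hup, norm_smul, hu]
        simp [mul_pow, sq_abs]
  have hxQ : ‖x‖ ^ 2 = b ^ 2 + ‖q‖ ^ 2 := by
    have hxe : x = b • u + q := by rw [hq]; abel
    calc ‖x‖ ^ 2 = ‖b • u + q‖ ^ 2 := by rw [← hxe]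
    _ = b ^ 2 + ‖q‖ ^ 2 := by
        rw [norm_add_sq_real, real_inner_smul_left, huq, norm_smul, hu]
        simp [mul_pow, sq_abs]
  have hsx : (inner ℝ s x : ℝ) = a * b + inner ℝ p q := by
    have hs' : s = a • u + p := by rw [hp]; abel
    have hx' : x = b • u + q := by rw [hq]; abel
    calc (inner ℝ s x : ℝ) = inner ℝ (a • u + p) (b • u + q) := by rw [← hs', ← hx']
    _ = a * b + inner ℝ p q := by
        simp [inner_add_left, inner_add_right, real_inner_smul_left,
          real_inner_smul_right, huu, huq, hpu, mul_comm, hu]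
  have hpq : (inner ℝ p q : ℝ) ≤ ‖p‖ * ‖q‖ := real_inner_le_norm p q
  have hD : (a - b) ^ 2 + (‖p‖ - ‖q‖) ^ 2 ≤ ‖s - x‖ ^ 2 := by
    have h2 : ‖s - x‖ ^ 2 = ‖s‖ ^ 2 - 2 * inner ℝ s x + ‖x‖ ^ 2 := by
      rw [norm_sub_sq_real]
    rw [h2, hsP, hxQ, hsx]; nlinarith
  exact key_real c sβ a b ‖p‖ ‖q‖ ‖s‖ ‖x‖ ‖s - x‖ hc0 hc1
    (hsβ ▸ Real.sqrt_nonneg _)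
    (by rw [hsβ, Real.sq_sqrt]; nlinarith)
    (norm_nonneg _) (norm_nonneg _) hsP hxQ (norm_nonneg _) (norm_nonneg _)
    hsa hx (norm_nonneg _) hD

lemma norm_decomp {V : Type*} [NormedAddCommGroup V] [InnerProductSpace ℝ V]
    (u : V) (hu : ‖u‖ = 1) (s : V) :
    ‖s‖ ^ 2 = (inner ℝ u s : ℝ) ^ 2 + ‖s - (inner ℝ u s : ℝ) • u‖ ^ 2 := by
  set a : ℝ := inner ℝ u s with ha
  set p : V := s - a • u with hp
  have huu : (inner ℝ u u : ℝ) = 1 := by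
    rw [real_inner_self_eq_norm_sq, hu]; norm_num
  have hup : (inner ℝ u p : ℝ) = 0 := by
    rw [hp, inner_sub_right, real_inner_smul_right, huu, mul_one, sub_self]
  have hse : s = a • u + p := by rw [hp]; abel
  calc ‖s‖ ^ 2 = ‖a • u + p‖ ^ 2 := by rw [← hse]
  _ = a ^ 2 + ‖p‖ ^ 2 := by
      rw [norm_add_sq_real, real_inner_smul_left, hup, norm_smul, hu]
      simp [mul_pow, sq_abs]

theorem stmt_5 (n : ℕ) (e : EuclideanSpace ℝ (Fin n))
    (he : ‖e‖ = Real.sqrt n) (δ γ : ℝ)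
    (hδ0 : 0 < δ) (hδγ : δ ≤ γ) (hγn : γ < Real.sqrt n)
    (sbar : EuclideanSpace ℝ (Fin n)) (hs0 : sbar ≠ 0)
    (hs : (inner ℝ e sbar : ℝ) ≥ γ * ‖sbar‖)
    (θ : ℝ) (hθ : θ = Real.arccos ((inner ℝ e sbar : ℝ) / (Real.sqrt n * ‖sbar‖))) :
    Metric.infDist sbar
        (frontier {x : EuclideanSpace ℝ (Fin n) | (inner ℝ e x : ℝ) ≥ δ * ‖x‖}) ≥
      ‖sbar‖ * (Real.sqrt (1 - δ ^ 2 / n) * Real.cos θ -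
        (δ / Real.sqrt n) * Real.sin θ) := by
  set m : ℝ := Real.sqrt n with hm
  have hm0 : 0 < m := lt_trans (lt_of_lt_of_le hδ0 hδγ) hγn
  have hnm : (n : ℝ) = m ^ 2 := (Real.sq_sqrt (Nat.cast_nonneg n)).symm
  have hns : 0 < ‖sbar‖ := norm_pos_iff.mpr hs0
  have hγ0 : 0 < γ := lt_of_lt_of_le hδ0 hδγ
  set u : EuclideanSpace ℝ (Fin n) := m⁻¹ • e with hud
  have hu : ‖u‖ = 1 := by
    rw [hud, norm_smul, he, norm_inv, Real.norm_eq_abs, abs_of_pos hm0]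
    field_simp
  set c : ℝ := δ / m with hc
  have hc0 : 0 < c := div_pos hδ0 hm0
  have hc1 : c < 1 := (div_lt_one hm0).2 (lt_of_le_of_lt hδγ hγn)
  set sβ : ℝ := Real.sqrt (1 - c ^ 2) with hsβ
  have hinner : ∀ y : EuclideanSpace ℝ (Fin n), (inner ℝ u y : ℝ) = m⁻¹ * inner ℝ e y :=
    fun y => real_inner_smul_left e y m⁻¹
  set a : ℝ := (inner ℝ u sbar : ℝ) with ha
  have hsa : a ≥ c * ‖sbar‖ := by
    rw [ha, hinner, hc, ge_iff_le, div_mul_eq_mul_div, div_le_iff₀ hm0]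
    have h1 : δ * ‖sbar‖ ≤ inner ℝ e sbar :=
      le_trans (mul_le_mul_of_nonneg_right hδγ hns.le) hs
    calc δ * ‖sbar‖ ≤ (inner ℝ e sbar : ℝ) := h1
    _ = m⁻¹ * (inner ℝ e sbar : ℝ) * m := by field_simp
  -- cos/sin of θ
  set t : ℝ := (inner ℝ e sbar : ℝ) / (m * ‖sbar‖) with htd
  have hip : (0:ℝ) < inner ℝ e sbar := lt_of_lt_of_le (mul_pos hγ0 hns) hs
  have ht0 : 0 ≤ t := le_of_lt (div_pos hip (by positivity))
  have ht1 : t ≤ 1 := by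
    rw [htd, div_le_one (by positivity)]
    calc (inner ℝ e sbar : ℝ) ≤ ‖e‖ * ‖sbar‖ := real_inner_le_norm e sbar
    _ = m * ‖sbar‖ := by rw [he]
  have hcos : Real.cos θ = t := by rw [hθ]; exact Real.cos_arccos (by linarith) ht1
  have hsin : Real.sin θ = Real.sqrt (1 - t ^ 2) := by
    rw [hθ, Real.sin_arccos]
  have hat : ‖sbar‖ * t = a := by
    rw [htd, ha, hinner]
    field_simp
  set p : EuclideanSpace ℝ (Fin n) := sbar - a • u with hp
  have hsP : ‖sbar‖ ^ 2 = a ^ 2 + ‖p‖ ^ 2 := by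
    rw [hp, ha]; exact norm_decomp u hu sbar
  have hPs : ‖sbar‖ * Real.sqrt (1 - t ^ 2) = ‖p‖ := by
    rw [← Real.sqrt_sq hns.le, ← Real.sqrt_mul (sq_nonneg _)]
    have h3 : ‖sbar‖ ^ 2 * (1 - t ^ 2) = ‖p‖ ^ 2 := by
      have h1 : (‖sbar‖ * t) ^ 2 = a ^ 2 := by rw [hat]
      nlinarith [hsP]
    rw [h3, Real.sqrt_sq (norm_nonneg _)]
  have hsqδ : Real.sqrt (1 - δ ^ 2 / n) = sβ := by
    rw [hsβ]
    congr 1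
    rw [hc, hnm]
    field_simp
  have hRHS : ‖sbar‖ * (Real.sqrt (1 - δ ^ 2 / n) * Real.cos θ -
      (δ / Real.sqrt n) * Real.sin θ) = sβ * a - c * ‖p‖ := by
    rw [hcos, hsin, hsqδ, ← hm, ← hc, ← hat, ← hPs]
    ring
  rw [hRHS]
  -- frontier facts
  set S := {x : EuclideanSpace ℝ (Fin n) | (inner ℝ e x : ℝ) ≥ δ * ‖x‖} with hS
  have hcont : Continuous fun x : EuclideanSpace ℝ (Fin n) => (inner ℝ e x : ℝ) :=
    Continuous.inner continuous_const continuous_id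
  have hfs : frontier S ⊆ {x : EuclideanSpace ℝ (Fin n) | (inner ℝ e x : ℝ) ≤ δ * ‖x‖} := by
    have h1 : frontier S ⊆ closure Sᶜ := by
      rw [← frontier_compl]
      exact frontier_subset_closure
    have h2 : Sᶜ ⊆ {x : EuclideanSpace ℝ (Fin n) | (inner ℝ e x : ℝ) ≤ δ * ‖x‖} := by
      intro y hy
      simp only [hS, Set.mem_compl_iff, Set.mem_setOf_eq, not_le, ge_iff_le] at hy ⊢
      exact le_of_lt hy
    have hcl : IsClosed {x : EuclideanSpace ℝ (Fin n) | (inner ℝ e x : ℝ) ≤ δ * ‖x‖} :=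
      isClosed_le hcont (continuous_const.mul continuous_norm)
    exact fun y hy => hcl.closure_subset_iff.2 h2 (h1 hy)
  have hne : (frontier S).Nonempty := by
    rw [nonempty_frontier_iff]
    constructor
    · refine ⟨e, ?_⟩
      simp only [hS, Set.mem_setOf_eq, ge_iff_le]
      rw [real_inner_self_eq_norm_sq, he]
      nlinarith
    · intro h
      have hmem : -e ∈ S := h ▸ Set.mem_univ _
      simp only [hS, Set.mem_setOf_eq, ge_iff_le] at hmem
      rw [inner_neg_right, real_inner_self_eq_norm_sq, norm_neg, he] at hmem
      nlinarith
  -- conclude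
  rw [ge_iff_le, ← not_lt]
  intro hlt
  obtain ⟨y, hy, hdy⟩ := (Metric.infDist_lt_iff hne).1 hlt
  have hyle : (inner ℝ u y : ℝ) ≤ c * ‖y‖ := by
    rw [hinner, hc, div_mul_eq_mul_div, le_div_iff₀ hm0]
    have h4 := hfs hy
    simp only [Set.mem_setOf_eq] at h4
    calc m⁻¹ * (inner ℝ e y : ℝ) * m = (inner ℝ e y : ℝ) := by field_simp
    _ ≤ δ * ‖y‖ := h4
  have hkey := key_dist u hu c sβ hc0 hc1 rfl sbar y (ha ▸ hsa) hyle
  rw [dist_eq_norm] at hdy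
  rw [← ha, ← hp] at hkey
  linarith
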